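/- Let T : X → X be a bounded linear operator on an infinite dimensional Banach space such that T is coarsely topologically mixing on an open cone C (for some d > 0). Then T is topologically mixing on X. -/

import Mathlib

open Filter Topology

variable {X : Type*} [NormedAddCommGroup X] [NormedSpace ℂ X]

/-- The orbit of `x` under `T`. -/
def orbitSet (T : X →L[ℂ] X) (x : X) : Set X := Set.range fun n : ℕ => (T ^ n) x

/-- The coarse orbit of `x` under `T` with respect to `d`. -/
def coarseOrbit (T : X →L[ℂ] X) (x : X) (d : ℝ) : Set X :=
  {y | ∃ n : ℕ, ‖(T ^ n) x - y‖ < d}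

/-- The extended (prolongational) limit set `J(x,T)`. -/
def jSet (T : X →L[ℂ] X) (x : X) : Set X :=
  {y | ∃ k : ℕ → ℕ, StrictMono k ∧ (∀ n, 0 < k n) ∧
    ∃ u : ℕ → X, Tendsto u atTop (𝓝 x) ∧
      Tendsto (fun n => (T ^ k n) (u n)) atTop (𝓝 y)}

/-- The coarse extended limit set `J(x,T,d)`. -/
def jCoarse (T : X →L[ℂ] X) (x : X) (d : ℝ) : Set X :=
  {y | ∃ k : ℕ → ℕ, StrictMono k ∧ (∀ n, 0 < k n) ∧
    ∃ u : ℕ → X, Tendsto u atTop (𝓝 x) ∧ ∀ n, ‖(T ^ k n) (u n) - y‖ < d}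

/-- The extended mixing limit set `J^{mix}(x,T)`. -/
def jMix (T : X →L[ℂ] X) (x : X) : Set X :=
  {y | ∃ u : ℕ → X, Tendsto u atTop (𝓝 x) ∧
    Tendsto (fun n => (T ^ n) (u n)) atTop (𝓝 y)}

/-- The coarse extended mixing limit set `J^{mix}(x,T,d)`. -/
def jMixCoarse (T : X →L[ℂ] X) (x : X) (d : ℝ) : Set X :=
  {y | ∃ u : ℕ → X, Tendsto u atTop (𝓝 x) ∧ ∀ n, ‖(T ^ n) (u n) - y‖ < d}

/-- The prolongation `D(x,T) = O(x,T) ∪ J(x,T)`. -/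
def dSet (T : X →L[ℂ] X) (x : X) : Set X := orbitSet T x ∪ jSet T x

/-- The coarse prolongation `D(x,T,d) = O(x,T,d) ∪ J(x,T,d)`. -/
def dCoarse (T : X →L[ℂ] X) (x : X) (d : ℝ) : Set X :=
  coarseOrbit T x d ∪ jCoarse T x d

/-- The coarse mixing prolongation `D^{mix}(x,T,d)`. -/
def dMixCoarse (T : X →L[ℂ] X) (x : X) (d : ℝ) : Set X :=
  coarseOrbit T x d ∪ jMixCoarse T x d

/-- An open cone: a nonempty open set invariant under positive scalar multiplication. -/
def IsOpenCone (C : Set X) : Prop :=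
  IsOpen C ∧ C.Nonempty ∧ ∀ x ∈ C, ∀ r : ℝ, 0 < r → (r : ℂ) • x ∈ C

theorem mixing_of_coarsely_mixing_on_cone [CompleteSpace X]
    (hinf : ¬ FiniteDimensional ℂ X)
    (T : X →L[ℂ] X) (C : Set X) (hC : IsOpenCone C) (d : ℝ) (hd : 0 < d)
    (h : ∀ U : Set X, IsOpen U → U.Nonempty → ∀ x ∈ C,
      ∃ N : ℕ, ∀ n ≥ N, ((T ^ n) '' U ∩ Metric.ball x d).Nonempty) :
    ∀ U V : Set X, IsOpen U → U.Nonempty → IsOpen V → V.Nonempty →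
      ∃ N : ℕ, ∀ n ≥ N, ((T ^ n) '' U ∩ V).Nonempty := by
  intro U V hU hUne hV hVne
  obtain ⟨u0, hu0⟩ := hUne
  obtain ⟨δ, hδ, hδU⟩ := Metric.isOpen_iff.1 hU u0 hu0
  obtain ⟨v, hv⟩ := hVne
  obtain ⟨ε, hε, hεV⟩ := Metric.isOpen_iff.1 hV v hv
  obtain ⟨hCopen, ⟨c, hc⟩, hCcone⟩ := hC
  -- Step 1 : points of the cone are coarse mixing limits of 0 with arbitrarily small error
  have hP : ∀ x ∈ C, ∀ ρ > (0:ℝ), ∀ e > (0:ℝ), ∃ N, ∀ n ≥ N,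
      ∃ w : X, ‖w‖ < ρ ∧ ‖(T ^ n) w - x‖ < e := by
    intro x hx ρ hρ e he
    set R : ℝ := d / e + 1 with hRdef
    have hRpos : 0 < R := by positivity
    have hRC : (R:ℂ) ≠ 0 := by
      simpa using hRpos.ne'
    obtain ⟨N, hN⟩ := h (Metric.ball 0 (ρ * R)) Metric.isOpen_ball
      (Metric.nonempty_ball.2 (by positivity)) ((R:ℂ) • x) (hCcone x hx R hRpos)
    refine ⟨N, fun n hn => ?_⟩
    obtain ⟨y, ⟨z, hz, rfl⟩, hy⟩ := hN n hn
    have hznorm : ‖z‖ < ρ * R := by simpa [Metric.mem_ball, dist_zero_right] using hz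
    have hynorm : ‖(T ^ n) z - (R:ℂ) • x‖ < d := by
      simpa [Metric.mem_ball, dist_eq_norm] using hy
    refine ⟨(R:ℂ)⁻¹ • z, ?_, ?_⟩
    · rw [norm_smul, norm_inv, Complex.norm_real, Real.norm_eq_abs, abs_of_pos hRpos]
      calc R⁻¹ * ‖z‖ < R⁻¹ * (ρ * R) := by gcongr
        _ = ρ := by field_simp
    · have : (T ^ n) ((R:ℂ)⁻¹ • z) - x = (R:ℂ)⁻¹ • ((T ^ n) z - (R:ℂ) • x) := by
        rw [map_smul, smul_sub, smul_smul, inv_mul_cancel₀ hRC, one_smul]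
      rw [this, norm_smul, norm_inv, Complex.norm_real, Real.norm_eq_abs, abs_of_pos hRpos]
      calc R⁻¹ * ‖(T ^ n) z - (R:ℂ) • x‖ < R⁻¹ * d := by gcongr
        _ < e := by
            rw [inv_mul_lt_iff₀ hRpos, hRdef]
            have : (d / e + 1) * e = d + e := by field_simp
            rw [this]; linarith
  -- Step 2 : every point of X is such a limit
  have hPall : ∀ y : X, ∀ ρ > (0:ℝ), ∀ e > (0:ℝ), ∃ N, ∀ n ≥ N,
      ∃ w : X, ‖w‖ < ρ ∧ ‖(T ^ n) w - y‖ < e := by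
    intro y ρ hρ e he
    rcases eq_or_ne y 0 with rfl | hy0
    · exact ⟨0, fun n _ => ⟨0, by simpa using hρ, by simpa using he⟩⟩
    obtain ⟨r, hr, hrC⟩ := Metric.isOpen_iff.1 hCopen c hc
    set s : ℝ := r / (2 * ‖y‖) with hsdef
    have hynorm : 0 < ‖y‖ := norm_pos_iff.2 hy0
    have hs : 0 < s := by positivity
    have hsC : (s:ℂ) ≠ 0 := by simpa using hs.ne'
    have hx1 : c + (s:ℂ) • y ∈ C := by
      apply hrC
      rw [Metric.mem_ball, dist_eq_norm]
      have : ‖c + (s:ℂ) • y - c‖ = s * ‖y‖ := by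
        rw [add_sub_cancel_left, norm_smul, Complex.norm_real, Real.norm_eq_abs,
          abs_of_pos hs]
      rw [this, hsdef]
      rw [div_mul_eq_mul_div, mul_comm 2 ‖y‖, ← div_div]
      have : r * ‖y‖ / ‖y‖ = r := by field_simp
      rw [this]
      linarith
    obtain ⟨N1, hN1⟩ := hP _ hx1 (ρ * s / 2) (by positivity) (e * s / 2) (by positivity)
    obtain ⟨N2, hN2⟩ := hP c hc (ρ * s / 2) (by positivity) (e * s / 2) (by positivity)
    refine ⟨max N1 N2, fun n hn => ?_⟩
    obtain ⟨w1, hw1n, hw1⟩ := hN1 n (le_trans (le_max_left _ _) hn)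
    obtain ⟨w2, hw2n, hw2⟩ := hN2 n (le_trans (le_max_right _ _) hn)
    refine ⟨(s:ℂ)⁻¹ • (w1 - w2), ?_, ?_⟩
    · rw [norm_smul, norm_inv, Complex.norm_real, Real.norm_eq_abs, abs_of_pos hs]
      calc s⁻¹ * ‖w1 - w2‖ ≤ s⁻¹ * (‖w1‖ + ‖w2‖) := by gcongr; exact norm_sub_le _ _
        _ < s⁻¹ * (ρ * s / 2 + ρ * s / 2) := by gcongr
        _ = ρ := by field_simp; norm_num
    · have key : (T ^ n) ((s:ℂ)⁻¹ • (w1 - w2)) - y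
          = (s:ℂ)⁻¹ • (((T ^ n) w1 - (c + (s:ℂ) • y)) - ((T ^ n) w2 - c)) := by
        rw [map_smul, map_sub]
        match_scalars <;> field_simp <;> ring
      rw [key, norm_smul, norm_inv, Complex.norm_real, Real.norm_eq_abs, abs_of_pos hs]
      calc s⁻¹ * ‖((T ^ n) w1 - (c + (s:ℂ) • y)) - ((T ^ n) w2 - c)‖
          ≤ s⁻¹ * (‖(T ^ n) w1 - (c + (s:ℂ) • y)‖ + ‖(T ^ n) w2 - c‖) := by
            gcongr; exact norm_sub_le _ _
        _ < s⁻¹ * (e * s / 2 + e * s / 2) := by gcongr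
        _ = e := by field_simp; norm_num
  -- Step 3 : assembling
  set t : ℝ := ε / (16 * d) with htdef
  have ht : 0 < t := by positivity
  have htC : (t:ℂ) ≠ 0 := by simpa using ht.ne'
  have htd : t * d = ε / 16 := by rw [htdef]; field_simp
  obtain ⟨N2, hN2⟩ := h (Metric.ball ((t:ℂ)⁻¹ • u0) (δ / (4 * t))) Metric.isOpen_ball
    (Metric.nonempty_ball.2 (by positivity)) c hc
  obtain ⟨N3, hN3⟩ := hPall ((t:ℂ) • c) (δ / 4) (by positivity) (ε / 8) (by positivity)
  obtain ⟨N1, hN1⟩ := hPall v (δ / 2) (by positivity) (ε / 2) (by positivity)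
  refine ⟨max (max N1 N2) N3, fun n hn => ?_⟩
  obtain ⟨y2, ⟨z, hz, rfl⟩, hy2⟩ := hN2 n (le_trans ((le_max_right _ _).trans (le_max_left _ _)) hn)
  obtain ⟨w2, hw2n, hw2⟩ := hN3 n (le_trans (le_max_right _ _) hn)
  obtain ⟨w1, hw1n, hw1⟩ := hN1 n (le_trans ((le_max_left _ _).trans (le_max_left _ _)) hn)
  set u1 : X := (t:ℂ) • z with hu1def
  have hu1 : ‖u1 - u0‖ < δ / 4 := by
    have hz' : ‖z - (t:ℂ)⁻¹ • u0‖ < δ / (4 * t) := by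
      simpa [Metric.mem_ball, dist_eq_norm] using hz
    have : u1 - u0 = (t:ℂ) • (z - (t:ℂ)⁻¹ • u0) := by
      rw [hu1def]
      match_scalars <;> field_simp
    rw [this, norm_smul, Complex.norm_real, Real.norm_eq_abs, abs_of_pos ht]
    calc t * ‖z - (t:ℂ)⁻¹ • u0‖ < t * (δ / (4 * t)) := by gcongr
      _ = δ / 4 := by field_simp
  have hTu1 : ‖(T ^ n) u1 - (t:ℂ) • c‖ < ε / 8 := by
    have hy2' : ‖(T ^ n) z - c‖ < d := by
      simpa [Metric.mem_ball, dist_eq_norm] using hy2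
    have : (T ^ n) u1 - (t:ℂ) • c = (t:ℂ) • ((T ^ n) z - c) := by
      rw [hu1def, map_smul, smul_sub]
    rw [this, norm_smul, Complex.norm_real, Real.norm_eq_abs, abs_of_pos ht]
    calc t * ‖(T ^ n) z - c‖ < t * d := by gcongr
      _ = ε / 16 := htd
      _ < ε / 8 := by linarith
  set u : X := u1 - w2 + w1 with hudef
  have huU : u ∈ U := by
    apply hδU
    rw [Metric.mem_ball, dist_eq_norm]
    have : u - u0 = (u1 - u0) - w2 + w1 := by rw [hudef]; abel
    rw [this]
    calc ‖(u1 - u0) - w2 + w1‖ ≤ ‖(u1 - u0) - w2‖ + ‖w1‖ := norm_add_le _ _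
      _ ≤ ‖u1 - u0‖ + ‖w2‖ + ‖w1‖ := by gcongr; exact norm_sub_le _ _
      _ < δ / 4 + δ / 4 + δ / 2 := by gcongr
      _ = δ := by ring
  have huV : (T ^ n) u ∈ V := by
    apply hεV
    rw [Metric.mem_ball, dist_eq_norm]
    have : (T ^ n) u - v = ((T ^ n) u1 - (t:ℂ) • c) - ((T ^ n) w2 - (t:ℂ) • c)
        + ((T ^ n) w1 - v) := by
      rw [hudef, map_add, map_sub]; abel
    rw [this]
    calc ‖((T ^ n) u1 - (t:ℂ) • c) - ((T ^ n) w2 - (t:ℂ) • c) + ((T ^ n) w1 - v)‖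
        ≤ ‖((T ^ n) u1 - (t:ℂ) • c) - ((T ^ n) w2 - (t:ℂ) • c)‖ + ‖(T ^ n) w1 - v‖ :=
          norm_add_le _ _
      _ ≤ ‖(T ^ n) u1 - (t:ℂ) • c‖ + ‖(T ^ n) w2 - (t:ℂ) • c‖ + ‖(T ^ n) w1 - v‖ := by
          gcongr; exact norm_sub_le _ _
      _ < ε / 8 + ε / 8 + ε / 2 := by gcongr
      _ ≤ ε := by linarith
  exact ⟨(T ^ n) u, ⟨u, huU, rfl⟩, huV⟩
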